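/- Let X be a Lévy process with positive sojourn time A_t, let q > 0 and let E^{(q)} ~ Exp(q) be independent of X. Then E[A_{E^{(q)}}] = ∫_0^∞ P(X_t > 0) e^{−qt} dt ≤ 1/q, and Var(A_{E^{(q)}}) = ∫_0^∞ P(X_t > 0) · t · e^{−qt} dt. -/

import Mathlib

open MeasureTheory ProbabilityTheory Real Set Filter

noncomputable section

variable {Ω : Type*} [MeasurableSpace Ω]

/-- The positive sojourn time of a process `X` up to time `t`:
`A_t := ∫_0^t 1{X_s > 0} ds`. -/
def sojourn (X : ℝ → Ω → ℝ) (t : ℝ) (ω : Ω) : ℝ :=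
  ∫ s in (0:ℝ)..t, (if 0 < X s ω then (1:ℝ) else 0)

/-- A real-valued Lévy process issued from the origin: càdlàg paths a.s.,
`X 0 = 0` a.s., stationary increments, and increments independent of the past. -/
structure IsLevyProcess (P : Measure Ω) (X : ℝ → Ω → ℝ) : Prop where
  measurable : ∀ t, Measurable (X t)
  start : ∀ᵐ ω ∂P, X 0 ω = 0
  cadlag : ∀ᵐ ω ∂P, ∀ t : ℝ, 0 ≤ t →
      ContinuousWithinAt (fun s => X s ω) (Set.Ici t) t ∧
      (0 < t → ∃ l : ℝ, Filter.Tendsto (fun s => X s ω) (nhdsWithin t (Set.Iio t)) (nhds l))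
  stationary : ∀ s t : ℝ, 0 ≤ s → s ≤ t →
      P.map (fun ω => X t ω - X s ω) = P.map (X (t - s))
  indep : ∀ s t : ℝ, 0 ≤ s → s ≤ t → ∀ (n : ℕ) (u : Fin n → ℝ),
      (∀ i, 0 ≤ u i ∧ u i ≤ s) →
      IndepFun (fun ω => X t ω - X s ω) (fun ω (i : Fin n) => X (u i) ω) P

namespace SojournAux
open scoped ENNReal NNReal Classical


/-- dyadic right approximation -/
def dy (n : ℕ) (s : ℝ) : ℝ := (⌈s * 2^n⌉ : ℤ) / 2^n

lemma measurable_dy (n : ℕ) : Measurable (dy n) := by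
  unfold dy
  have h1 : Measurable fun s : ℝ => (⌈s * 2^n⌉ : ℤ) := (measurable_id.mul_const _).ceil
  exact (Measurable.of_discrete (f := fun k : ℤ => (k : ℝ) / 2^n)).comp h1

lemma le_dy (n : ℕ) (s : ℝ) : s ≤ dy n s := by
  rw [dy, le_div_iff₀ (by positivity)]
  exact Int.le_ceil _

lemma dy_le (n : ℕ) (s : ℝ) : dy n s ≤ s + (2:ℝ)⁻¹ ^ n := by
  rw [dy, div_le_iff₀ (by positivity)]
  have := (Int.ceil_lt_add_one (s * 2^n)).le
  calc ((⌈s * 2^n⌉ : ℤ) : ℝ) ≤ s * 2^n + 1 := this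
    _ ≤ (s + (2:ℝ)⁻¹ ^ n) * 2 ^ n := by
        rw [add_mul]
        have : (2:ℝ)⁻¹ ^ n * 2 ^ n = 1 := by
          rw [← mul_pow]; norm_num
        rw [this]

lemma tendsto_dy (s : ℝ) : Tendsto (fun n => dy n s) atTop (nhdsWithin s (Ici s)) := by
  apply tendsto_nhdsWithin_of_tendsto_nhds_of_eventually_within
  · have h1 : Tendsto (fun n : ℕ => s + (2:ℝ)⁻¹ ^ n) atTop (nhds (s + 0)) := by
      exact tendsto_const_nhds.add (tendsto_pow_atTop_nhds_zero_of_lt_one (by norm_num) (by norm_num))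
    rw [add_zero] at h1
    exact tendsto_of_tendsto_of_tendsto_of_le_of_le tendsto_const_nhds h1 (le_dy · s) (dy_le · s)
  · exact Eventually.of_forall fun n => le_dy n s



/-- measurable functional on path space computing the right limit along dyadics -/
def Lpath (s : ℝ) (f : ℝ → ℝ) : ℝ := limsup (fun n => f (dy n s)) atTop

lemma measurable_Lpath (s : ℝ) : Measurable (fun f : ℝ → ℝ => Lpath s f) :=
  Measurable.limsup (fun n => measurable_pi_apply (dy n s))

lemma Lpath_eq {X : ℝ → Ω → ℝ} {ω : Ω}
    (hω : ∀ t : ℝ, 0 ≤ t → ContinuousWithinAt (fun s => X s ω) (Set.Ici t) t)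
    {s : ℝ} (hs : 0 ≤ s) : Lpath s (fun r => X r ω) = X s ω := by
  have : Tendsto (fun n => X (dy n s) ω) atTop (nhds (X s ω)) :=
    (hω s hs).tendsto.comp (tendsto_dy s)
  exact this.limsup_eq

lemma measurable_L {X : ℝ → Ω → ℝ} (hX : ∀ t, Measurable (X t)) :
    Measurable (fun p : ℝ × Ω => Lpath p.1 (fun r => X r p.2)) := by
  apply Measurable.limsup
  intro n
  have h1 : Measurable (fun p : ℝ × Ω => ((⌈p.1 * 2^n⌉ : ℤ), p.2)) :=
    (((measurable_fst.mul_const _).ceil)).prodMk measurable_snd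
  have h2 : Measurable (fun p : ℤ × Ω => X ((p.1 : ℝ) / 2^n) p.2) := by
    have := (measurable_from_prod_countable_left (f := fun p : Ω × ℤ => X ((p.2 : ℝ)/2^n) p.1)
      (fun k => hX ((k:ℝ)/2^n))).comp measurable_swap
    exact this
  have : (fun p : ℝ × Ω => X (dy n p.1) p.2)
      = (fun p : ℤ × Ω => X ((p.1 : ℝ) / 2^n) p.2) ∘ (fun p : ℝ × Ω => ((⌈p.1 * 2^n⌉ : ℤ), p.2)) := by
    funext p; simp [dy]
  have h3 : Measurable (fun p : ℝ × Ω => X (dy n p.1) p.2) := this ▸ (h2.comp h1)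
  exact h3





lemma lintegral_ite_one {μ : Measure Ω} {p : Ω → Prop} [∀ ω, Decidable (p ω)] (hp : MeasurableSet {ω | p ω}) :
    (∫⁻ ω, (if p ω then (1:ℝ≥0∞) else 0) ∂μ) = μ {ω | p ω} := by
  have h : (fun ω => if p ω then (1:ℝ≥0∞) else 0) = {ω | p ω}.indicator 1 := by
    funext ω; by_cases h : p ω <;> simp [h, Set.indicator, Set.mem_setOf_eq]
  rw [h, lintegral_indicator_one hp]

/-- tail of the exponential distribution -/
lemma expMeasure_Ioi {q : ℝ} (hq : 0 < q) {s : ℝ} (hs : 0 ≤ s) :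
    expMeasure q (Ioi s) = ENNReal.ofReal (Real.exp (-(q * s))) := by
  haveI := isProbabilityMeasure_expMeasure hq
  have hIic : expMeasure q (Iic s) = ENNReal.ofReal (1 - Real.exp (-(q * s))) := by
    rw [expMeasure, gammaMeasure, withDensity_apply _ measurableSet_Iic]
    have h := lintegral_exponentialPDF_eq_antiDeriv hq s
    rw [if_pos hs] at h
    exact h
  have h1 : Ioi s = (Iic s)ᶜ := by simp
  rw [h1, prob_compl_eq_one_sub measurableSet_Iic, hIic]
  have he1 : Real.exp (-(q * s)) ≤ 1 := Real.exp_le_one_iff.mpr (by nlinarith)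
  have : ENNReal.ofReal (1 - (1 - Real.exp (-(q * s))))
      = ENNReal.ofReal 1 - ENNReal.ofReal (1 - Real.exp (-(q * s))) :=
    ENNReal.ofReal_sub _ (by linarith)
  simp only [sub_sub_cancel, ENNReal.ofReal_one] at this
  rw [← this]





lemma levy_key {P : Measure Ω} [IsProbabilityMeasure P] {X : ℝ → Ω → ℝ}
    (hm : ∀ t, Measurable (X t)) {s u : ℝ} (hs : 0 ≤ s) (hu : 0 ≤ u)
    (hstat : ∀ a b : ℝ, 0 ≤ a → a ≤ b → P.map (fun ω => X b ω - X a ω) = P.map (X (b - a)))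
    (hind : ∀ a b : ℝ, 0 ≤ a → a ≤ b → IndepFun (fun ω => X b ω - X a ω) (X a) P) :
    P {ω | 0 < X s ω ∧ 0 < X (s+u) ω} + P {ω | 0 < X u ω ∧ 0 < X (s+u) ω}
      = P {ω | 0 < X (s+u) ω} + P {ω | 0 < X s ω} * P {ω | 0 < X u ω} := by
  set t := s + u with ht
  have hst : s ≤ t := by simp [ht]; linarith
  have hut : u ≤ t := by simp [ht]; linarith
  set D : Ω → ℝ := fun ω => X t ω - X s ω with hD
  set D' : Ω → ℝ := fun ω => X t ω - X u ω with hD'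
  have hmD : Measurable D := (hm t).sub (hm s)
  have hmD' : Measurable D' := (hm t).sub (hm u)
  have h1 : IndepFun D (X s) P := hind s t hs hst
  have h2 : IndepFun D' (X u) P := hind u t hu hut
  have law1 : P.map D = P.map (X u) := by
    have := hstat s t hs hst; rw [hD]; rw [this]; congr 1; simp [ht]
  have law2 : P.map D' = P.map (X s) := by
    have := hstat u t hu hut; rw [hD']; rw [this]; congr 1; simp [ht]
  -- the time-reversal / rearrangement identity
  set T : Set (ℝ × ℝ) := {p | 0 < p.2 ∧ 0 < p.1 + p.2} with hTdef
  have hT : MeasurableSet T :=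
    (measurableSet_lt measurable_const measurable_snd).inter
      (measurableSet_lt measurable_const (measurable_fst.add measurable_snd))
  have step1 : P {ω | 0 < D ω ∧ 0 < X t ω} = P {ω | 0 < X u ω ∧ 0 < X t ω} := by
    have map1 : P.map (fun ω => (X s ω, D ω)) = (P.map (X s)).prod (P.map (X u)) := by
      rw [(indepFun_iff_map_prod_eq_prod_map_map (hm s).aemeasurable hmD.aemeasurable).mp h1.symm,
        law1]
    have map2 : P.map (fun ω => (D' ω, X u ω)) = (P.map (X s)).prod (P.map (X u)) := by
      rw [(indepFun_iff_map_prod_eq_prod_map_map hmD'.aemeasurable (hm u).aemeasurable).mp h2,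
        law2]
    have e1 : {ω | 0 < D ω ∧ 0 < X t ω} = (fun ω => (X s ω, D ω)) ⁻¹' T := by
      ext ω; simp only [hTdef, Set.mem_setOf_eq, Set.mem_preimage, hD]
      constructor <;> rintro ⟨h, h'⟩ <;> exact ⟨h, by linarith⟩
    have e2 : {ω | 0 < X u ω ∧ 0 < X t ω} = (fun ω => (D' ω, X u ω)) ⁻¹' T := by
      ext ω; simp only [hTdef, Set.mem_setOf_eq, Set.mem_preimage, hD']
      constructor <;> rintro ⟨h, h'⟩ <;> exact ⟨h, by linarith⟩
    rw [e1, e2, ← Measure.map_apply ((hm s).prodMk hmD) hT,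
      ← Measure.map_apply (hmD'.prodMk (hm u)) hT, map1, map2]
  set A := {ω | 0 < X s ω} with hA
  set B := {ω | 0 < D ω} with hB
  set C := {ω | 0 < X t ω} with hC
  have hmA : MeasurableSet A := measurableSet_lt measurable_const (hm s)
  have hmB : MeasurableSet B := measurableSet_lt measurable_const hmD
  have hmC : MeasurableSet C := measurableSet_lt measurable_const (hm t)
  have hsub1 : A ∩ B ⊆ C := by
    rintro ω ⟨h1', h2'⟩
    simp only [hA, hB, hC, hD, Set.mem_setOf_eq] at *
    linarith
  have hsub2 : C ⊆ A ∪ B := by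
    intro ω hω
    simp only [hA, hB, hC, hD, Set.mem_setOf_eq, Set.mem_union] at *
    by_contra hcon
    push_neg at hcon
    obtain ⟨ha, hb⟩ := hcon
    linarith
  have key : P C + P (A ∩ B) = P (A ∩ C) + P (B ∩ C) := by
    have := measure_union_add_inter (μ := P) (A ∩ C) (hmB.inter hmC)
    have e1 : (A ∩ C) ∪ (B ∩ C) = C := by
      rw [← Set.union_inter_distrib_right]; exact Set.inter_eq_right.mpr hsub2
    have e2 : (A ∩ C) ∩ (B ∩ C) = A ∩ B := by
      have : (A ∩ C) ∩ (B ∩ C) = (A ∩ B) ∩ C := by ext ω; simp; tauto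
      rw [this]; exact Set.inter_eq_left.mpr hsub1
    rw [e1, e2] at this
    exact this
  have hPAB : P (A ∩ B) = P A * P B := by
    have := h1.symm.measure_inter_preimage_eq_mul (Ioi 0) (Ioi 0)
      measurableSet_Ioi measurableSet_Ioi
    simpa [hA, hB, Set.preimage, Set.mem_Ioi] using this
  have hPB : P B = P {ω | 0 < X u ω} := by
    have e : B = D ⁻¹' (Ioi 0) := rfl
    have e' : {ω | 0 < X u ω} = (X u) ⁻¹' (Ioi 0) := rfl
    rw [e, e', ← Measure.map_apply hmD measurableSet_Ioi,
      ← Measure.map_apply (hm u) measurableSet_Ioi, law1]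
  have eAC : A ∩ C = {ω | 0 < X s ω ∧ 0 < X t ω} := by
    ext ω; simp [hA, hC, Set.mem_setOf_eq]
  have eBC : B ∩ C = {ω | 0 < D ω ∧ 0 < X t ω} := by
    ext ω; simp [hB, hC, Set.mem_setOf_eq]
  rw [← step1, ← eAC, ← eBC, ← hPB, ← hPAB]
  exact key.symm



lemma lintegral_Ioi_translate {f : ℝ → ℝ≥0∞} (hf : Measurable f) (s : ℝ) :
    ∫⁻ t in Ioi s, f t = ∫⁻ u in Ioi (0:ℝ), f (u + s) := by
  have hmp : Measure.map (fun x : ℝ => x + s) volume = volume :=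
    (measurePreserving_add_right volume s).map_eq
  conv_lhs => rw [← hmp]
  rw [setLIntegral_map measurableSet_Ioi hf (measurable_add_const s)]
  congr 1
  ext x; simp [Set.mem_Ioi]

lemma lintegral_triangle {g : ℝ → ℝ≥0∞} (hg : Measurable g) :
    (∫⁻ s in Ioi (0:ℝ), ∫⁻ t in Ioi s, g t) = ∫⁻ t in Ioi (0:ℝ), g t * ENNReal.ofReal t := by
  have step1 : ∀ s : ℝ, 0 < s → (∫⁻ t in Ioi s, g t)
      = ∫⁻ t in Ioi (0:ℝ), (if s < t then g t else 0) := by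
    intro s hs
    have : (fun t => if s < t then g t else 0) = (Ioi s).indicator g := by
      funext t; by_cases h : s < t <;> simp [h, Set.indicator, Set.mem_Ioi]
    rw [this, lintegral_indicator measurableSet_Ioi, Measure.restrict_restrict measurableSet_Ioi]
    congr 1
    rw [show Ioi s ∩ Ioi (0:ℝ) = Ioi s from
      Set.inter_eq_left.mpr (fun x (hx : x ∈ Ioi s) => lt_trans hs hx)]
  rw [setLIntegral_congr_fun measurableSet_Ioi (fun s hs => step1 s hs)]
  rw [lintegral_lintegral_swap]
  · apply setLIntegral_congr_fun measurableSet_Ioi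
    intro t ht
    beta_reduce
    have : (fun s => if s < t then g t else 0) = (Iio t).indicator (fun _ => g t) := by
      funext u; by_cases h : u < t <;> simp [h, Set.indicator, Set.mem_Iio]
    rw [this, lintegral_indicator_const measurableSet_Iio,
      Measure.restrict_apply measurableSet_Iio]
    have : Iio t ∩ Ioi 0 = Ioo 0 t := by ext x; simp [Set.mem_Ioo, and_comm]
    rw [this, Real.volume_Ioo, mul_comm, sub_zero]
    ring
  · apply Measurable.aemeasurable
    apply Measurable.ite (measurableSet_lt measurable_fst measurable_snd)
      (hg.comp measurable_snd) measurable_const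



lemma lintegral_pdf_Ioi {a q : ℝ} (ha : 0 < a) (hq : 0 < q) :
    (∫⁻ t in Ioi (0:ℝ), gammaPDF a q t) = 1 := by
  have htot := lintegral_gammaPDF_eq_one ha hq
  have hsplit : (∫⁻ t, gammaPDF a q t) = (∫⁻ t in Iio (0:ℝ), gammaPDF a q t)
      + ∫⁻ t in Ici (0:ℝ), gammaPDF a q t := by
    rw [← lintegral_add_compl _ measurableSet_Iio]
    congr 1
    rw [show (Iio (0:ℝ))ᶜ = Ici 0 from compl_Iio]
  have hneg : (∫⁻ t in Iio (0:ℝ), gammaPDF a q t) = 0 := by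
    rw [setLIntegral_congr_fun measurableSet_Iio (fun t (ht : t < 0) => gammaPDF_of_neg ht)]
    simp
  have hIci : (∫⁻ t in Ici (0:ℝ), gammaPDF a q t) = ∫⁻ t in Ioi (0:ℝ), gammaPDF a q t := by
    rw [Measure.restrict_congr_set (Ioi_ae_eq_Ici (a := (0:ℝ)))]
  rw [hsplit, hneg, zero_add, hIci] at htot
  exact htot

lemma lintegral_exp_Ioi {q : ℝ} (hq : 0 < q) :
    (∫⁻ t in Ioi (0:ℝ), ENNReal.ofReal (Real.exp (-(q * t)))) = ENNReal.ofReal (1/q) := by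
  have h1 := lintegral_pdf_Ioi one_pos hq
  have h2 : ∀ t ∈ Ioi (0:ℝ), gammaPDF 1 q t
      = ENNReal.ofReal q * ENNReal.ofReal (Real.exp (-(q * t))) := by
    intro t ht
    rw [gammaPDF_of_nonneg (le_of_lt ht)]
    rw [Real.Gamma_one, Real.rpow_one, sub_self, Real.rpow_zero]
    rw [show q / 1 * 1 * Real.exp (-(q * t)) = q * Real.exp (-(q * t)) by ring]
    rw [ENNReal.ofReal_mul hq.le]
  rw [setLIntegral_congr_fun measurableSet_Ioi h2] at h1
  rw [lintegral_const_mul' _ _ ENNReal.ofReal_ne_top] at h1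
  have hne : ENNReal.ofReal q ≠ 0 := by simp [hq, hq.not_ge]
  calc (∫⁻ t in Ioi (0:ℝ), ENNReal.ofReal (Real.exp (-(q * t))))
      = (ENNReal.ofReal q)⁻¹ * (ENNReal.ofReal q
          * ∫⁻ t in Ioi (0:ℝ), ENNReal.ofReal (Real.exp (-(q * t)))) := by
        rw [← mul_assoc, ENNReal.inv_mul_cancel hne ENNReal.ofReal_ne_top, one_mul]
    _ = (ENNReal.ofReal q)⁻¹ * 1 := by rw [h1]
    _ = ENNReal.ofReal (1/q) := by
        rw [mul_one, one_div, ENNReal.ofReal_inv_of_pos hq]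

lemma lintegral_texp_Ioi_lt_top {q : ℝ} (hq : 0 < q) :
    (∫⁻ t in Ioi (0:ℝ), ENNReal.ofReal t * ENNReal.ofReal (Real.exp (-(q * t)))) < ⊤ := by
  have h1 := lintegral_pdf_Ioi (two_pos) hq
  have h2 : ∀ t ∈ Ioi (0:ℝ), ENNReal.ofReal (q ^ (2:ℝ)) *
      (ENNReal.ofReal t * ENNReal.ofReal (Real.exp (-(q * t)))) = gammaPDF 2 q t := by
    intro t ht
    rw [gammaPDF_of_nonneg (le_of_lt ht), Real.Gamma_two]
    rw [show (2:ℝ) - 1 = 1 by norm_num, Real.rpow_one, div_one]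
    have ht' : (0:ℝ) < t := ht
    rw [ENNReal.ofReal_mul (mul_nonneg (Real.rpow_nonneg hq.le _) ht'.le),
      ENNReal.ofReal_mul (Real.rpow_nonneg hq.le _)]
    ring
  have h3 : ENNReal.ofReal (q ^ (2:ℝ)) *
      (∫⁻ t in Ioi (0:ℝ), ENNReal.ofReal t * ENNReal.ofReal (Real.exp (-(q * t)))) = 1 := by
    rw [← lintegral_const_mul' _ _ ENNReal.ofReal_ne_top]
    rw [setLIntegral_congr_fun measurableSet_Ioi h2]
    exact h1
  by_contra hcon
  push_neg at hcon
  rw [top_le_iff.mp hcon] at h3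
  rw [ENNReal.mul_top (by simp [Real.rpow_natCast]; positivity)] at h3
  exact (by simp : (⊤:ℝ≥0∞) ≠ 1) h3




lemma double_restrict_eq {F : ℝ → ℝ → ℝ≥0∞} :
    (∫⁻ s in Ioi (0:ℝ), ∫⁻ t in Ioi (0:ℝ), F s t)
      = ∫⁻ s, ∫⁻ t, (if 0 < s ∧ 0 < t then F s t else 0) := by
  rw [← lintegral_indicator measurableSet_Ioi]
  apply lintegral_congr
  intro s
  by_cases hs : 0 < s
  · rw [Set.indicator_of_mem (Set.mem_Ioi.mpr hs), ← lintegral_indicator measurableSet_Ioi]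
    apply lintegral_congr
    intro t
    by_cases ht : 0 < t <;> simp [hs, ht, Set.indicator, Set.mem_Ioi]
  · rw [Set.indicator_of_notMem (by simpa using hs)]
    symm
    simp [hs]

lemma lintegral_Ioi_Ioi_swap {F : ℝ → ℝ → ℝ≥0∞} (hF : Measurable (Function.uncurry F)) :
    (∫⁻ s in Ioi (0:ℝ), ∫⁻ t in Ioi (0:ℝ), F s t)
      = ∫⁻ s in Ioi (0:ℝ), ∫⁻ t in Ioi (0:ℝ), F t s := by
  rw [double_restrict_eq, double_restrict_eq (F := fun s t => F t s)]
  rw [lintegral_lintegral_swap]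
  · apply lintegral_congr; intro s
    apply lintegral_congr; intro t
    exact if_congr and_comm rfl rfl
  · apply Measurable.aemeasurable
    exact Measurable.ite
      ((measurableSet_lt measurable_const measurable_fst).inter
        (measurableSet_lt measurable_const measurable_snd))
      hF measurable_const

lemma symm_split {F : ℝ → ℝ → ℝ≥0∞} (hF : Measurable (Function.uncurry F))
    (hsymm : ∀ s t, F s t = F t s) :
    (∫⁻ s in Ioi (0:ℝ), ∫⁻ t in Ioi (0:ℝ), F s t)
      = 2 * ∫⁻ s in Ioi (0:ℝ), ∫⁻ t in Ioi s, F s t := by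
  have he1meas : Measurable (fun p : ℝ × ℝ => if 0 < p.1 ∧ 0 < p.2 ∧ p.2 ≤ p.1 then F p.1 p.2 else 0) :=
    Measurable.ite
      ((measurableSet_lt measurable_const measurable_fst).inter
        ((measurableSet_lt measurable_const measurable_snd).inter
          (measurableSet_le measurable_snd measurable_fst)))
      hF measurable_const
  have he2meas : Measurable (fun p : ℝ × ℝ => if 0 < p.1 ∧ 0 < p.2 ∧ p.1 < p.2 then F p.1 p.2 else 0) :=
    Measurable.ite
      ((measurableSet_lt measurable_const measurable_fst).inter
        ((measurableSet_lt measurable_const measurable_snd).inter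
          (measurableSet_lt measurable_fst measurable_snd)))
      hF measurable_const
  have hsplit : (∫⁻ s in Ioi (0:ℝ), ∫⁻ t in Ioi (0:ℝ), F s t)
      = (∫⁻ s, ∫⁻ t, (if 0 < s ∧ 0 < t ∧ t ≤ s then F s t else 0))
        + (∫⁻ s, ∫⁻ t, (if 0 < s ∧ 0 < t ∧ s < t then F s t else 0)) := by
    have hpt : ∀ s t : ℝ, (if 0 < s ∧ 0 < t then F s t else 0)
        = (if 0 < s ∧ 0 < t ∧ t ≤ s then F s t else 0)
          + (if 0 < s ∧ 0 < t ∧ s < t then F s t else 0) := by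
      intro s t
      rcases le_or_gt t s with h | h
      · by_cases hs : 0 < s <;> by_cases ht : 0 < t <;> simp [hs, ht, h, not_lt.mpr h]
      · by_cases hs : 0 < s <;> by_cases ht : 0 < t <;> simp [hs, ht, h, not_le.mpr h, h.le]
    rw [double_restrict_eq]
    have hin : ∀ s : ℝ, (∫⁻ t, (if 0 < s ∧ 0 < t then F s t else 0))
        = (∫⁻ t, (if 0 < s ∧ 0 < t ∧ t ≤ s then F s t else 0))
          + ∫⁻ t, (if 0 < s ∧ 0 < t ∧ s < t then F s t else 0) := by
      intro s
      rw [lintegral_congr (fun t => hpt s t)]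
      exact lintegral_add_left (he1meas.comp (measurable_const.prodMk measurable_id)) _
    rw [lintegral_congr hin]
    exact lintegral_add_left (Measurable.lintegral_prod_right (f := fun s t =>
      if 0 < s ∧ 0 < t ∧ t ≤ s then F s t else 0) he1meas) _
  have heq12 : (∫⁻ s, ∫⁻ t, (if 0 < s ∧ 0 < t ∧ t ≤ s then F s t else 0))
      = ∫⁻ s, ∫⁻ t, (if 0 < s ∧ 0 < t ∧ s < t then F s t else 0) := by
    rw [lintegral_lintegral_swap he1meas.aemeasurable]
    apply lintegral_congr; intro s
    have hae : ∀ᵐ t : ℝ, t ≠ s := by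
      rw [ae_iff]
      have : {t : ℝ | ¬ t ≠ s} = {s} := by ext t; simp
      rw [this]
      exact measure_singleton s
    apply lintegral_congr_ae
    filter_upwards [hae] with t hts
    have : (0 < t ∧ 0 < s ∧ s ≤ t) ↔ (0 < s ∧ 0 < t ∧ s < t) := by
      constructor
      · rintro ⟨h1, h2, h3⟩; exact ⟨h2, h1, lt_of_le_of_ne h3 (Ne.symm hts)⟩
      · rintro ⟨h1, h2, h3⟩; exact ⟨h2, h1, h3.le⟩
    rw [if_congr this (hsymm t s) rfl]
  have hlast : (∫⁻ s, ∫⁻ t, (if 0 < s ∧ 0 < t ∧ s < t then F s t else 0))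
      = ∫⁻ s in Ioi (0:ℝ), ∫⁻ t in Ioi s, F s t := by
    rw [← lintegral_indicator measurableSet_Ioi]
    apply lintegral_congr; intro s
    by_cases hs : 0 < s
    · rw [Set.indicator_of_mem (Set.mem_Ioi.mpr hs), ← lintegral_indicator measurableSet_Ioi]
      apply lintegral_congr; intro t
      by_cases ht : s < t
      · simp [hs, ht, lt_trans hs ht, Set.indicator, Set.mem_Ioi]
      · simp [hs, ht, Set.indicator, Set.mem_Ioi]
    · rw [Set.indicator_of_notMem (by simpa using hs)]
      symm; simp [hs]
  rw [hsplit, heq12, hlast, two_mul]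




lemma real_eq_toReal {g : ℝ → ℝ≥0∞} (hg : Measurable g) (hfin : ∀ t, g t ≠ ⊤)
    {w : ℝ → ℝ} (hw : Measurable w) (hw0 : ∀ t ∈ Ioi (0:ℝ), 0 ≤ w t) :
    (∫ t in Ioi (0:ℝ), (g t).toReal * w t)
      = (∫⁻ t in Ioi (0:ℝ), g t * ENNReal.ofReal (w t)).toReal := by
  rw [integral_eq_lintegral_of_nonneg_ae]
  · congr 1
    apply setLIntegral_congr_fun measurableSet_Ioi
    intro t ht
    beta_reduce
    rw [ENNReal.ofReal_mul ENNReal.toReal_nonneg, ENNReal.ofReal_toReal (hfin t)]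
  · rw [EventuallyLE, ae_restrict_iff' measurableSet_Ioi]
    exact ae_of_all _ fun t ht => mul_nonneg ENNReal.toReal_nonneg (hw0 t ht)
  · exact ((ENNReal.measurable_toReal.comp hg).mul hw).aestronglyMeasurable


end SojournAux

attribute [irreducible] SojournAux.Lpath SojournAux.dy

open scoped ENNReal NNReal

/-- **Mean and variance of the sojourn time at an independent exponential time.**
If `E ~ Exp(q)` is independent of the Lévy process `X`, then
`E[A_E] = ∫_0^∞ P(X_t > 0) e^{-qt} dt ≤ 1/q` and
`Var(A_E) = ∫_0^∞ P(X_t > 0) t e^{-qt} dt`. -/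
theorem sojourn_exponential_mean_variance (P : Measure Ω) [IsProbabilityMeasure P]
    (X : ℝ → Ω → ℝ) (hX : IsLevyProcess P X) (q : ℝ) (hq : 0 < q)
    (E : Ω → ℝ) (hE : Measurable E) (hEdist : P.map E = expMeasure q)
    (hEX : IndepFun E (fun ω (s : ℝ) => X s ω) P) :
    (∫ ω, sojourn X (E ω) ω ∂P
        = ∫ t in Set.Ioi (0:ℝ), (P {ω | 0 < X t ω}).toReal * Real.exp (-q * t)) ∧
    (∫ ω, sojourn X (E ω) ω ∂P ≤ 1 / q) ∧
    variance (fun ω => sojourn X (E ω) ω) P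
        = ∫ t in Set.Ioi (0:ℝ), (P {ω | 0 < X t ω}).toReal * t * Real.exp (-q * t) := by
  classical
  set XP : Ω → ℝ → ℝ := fun ω (r : ℝ) => X r ω with hXPdef
  set L : ℝ → Ω → ℝ := fun s ω => SojournAux.Lpath s (XP ω) with hLdef
  have hLmeas : Measurable (fun p : ℝ × Ω => L p.1 p.2) := SojournAux.measurable_L hX.measurable
  have hG : ∀ᵐ ω ∂P, ∀ s : ℝ, 0 ≤ s → L s ω = X s ω := by
    filter_upwards [hX.cadlag] with ω hω s hs
    exact SojournAux.Lpath_eq (fun t ht => (hω t ht).1) hs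
  haveI := isProbabilityMeasure_expMeasure hq
  have hEpos : ∀ᵐ ω ∂P, 0 < E ω := by
    rw [ae_iff]
    have h0 : {ω | ¬ 0 < E ω} = E ⁻¹' (Iic 0) := by ext ω; simp [not_lt]
    rw [h0, ← Measure.map_apply hE measurableSet_Iic, hEdist]
    rw [show Iic (0:ℝ) = (Ioi 0)ᶜ from (compl_Ioi).symm,
      prob_compl_eq_one_sub measurableSet_Ioi, SojournAux.expMeasure_Ioi hq le_rfl]
    simp
  have hTail : ∀ m : ℝ, 0 ≤ m → P (E ⁻¹' Ioi m) = ENNReal.ofReal (Real.exp (-(q*m))) := by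
    intro m hm
    rw [← Measure.map_apply hE measurableSet_Ioi, hEdist, SojournAux.expMeasure_Ioi hq hm]
  set k : ℝ → Ω → ℝ≥0∞ := fun s ω => if 0 < s ∧ s < E ω ∧ 0 < L s ω then 1 else 0 with hkdef
  have hkmeas : Measurable (Function.uncurry k) := by
    have h1 : MeasurableSet {p : ℝ × Ω | 0 < p.1 ∧ p.1 < E p.2 ∧ 0 < L p.1 p.2} := by
      simp only [Set.setOf_and]
      exact (measurableSet_lt measurable_const measurable_fst).inter
        ((measurableSet_lt measurable_fst (hE.comp measurable_snd)).inter
          (measurableSet_lt measurable_const hLmeas))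
    exact Measurable.ite h1 measurable_const measurable_const
  have hk_le_one : ∀ s ω, k s ω ≤ 1 := by
    intro s ω; simp only [hkdef]; split_ifs <;> simp
  have hkle : ∀ s ω, k s ω ≤ (Ioo 0 (E ω)).indicator 1 s := by
    intro s ω
    by_cases h : 0 < s ∧ s < E ω ∧ 0 < L s ω
    · simp only [hkdef, if_pos h]
      rw [Set.indicator_of_mem (Set.mem_Ioo.mpr ⟨h.1, h.2.1⟩)]
      simp
    · simp [hkdef, h]
  have hfin : ∀ ω, (∫⁻ s, k s ω) < ⊤ := by
    intro ω
    refine lt_of_le_of_lt (lintegral_mono (fun s => hkle s ω)) ?_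
    rw [lintegral_indicator_one measurableSet_Ioo]
    exact measure_Ioo_lt_top
  have hwmeas : Measurable (fun ω => ∫⁻ s, k s ω) :=
    Measurable.lintegral_prod_right (f := fun ω s => k s ω) (hkmeas.comp measurable_swap)
  -- a.e. representation of the sojourn time at the exponential time
  have hrep : ∀ᵐ ω ∂P, sojourn X (E ω) ω = (∫⁻ s, k s ω).toReal := by
    filter_upwards [hG, hEpos] with ω hωG hωE
    have hLsecm : Measurable (fun s => L s ω) := hLmeas.comp (measurable_id.prodMk measurable_const)
    have e1 : sojourn X (E ω) ω = ∫ s in (0:ℝ)..E ω, (if 0 < L s ω then (1:ℝ) else 0) := by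
      apply intervalIntegral.integral_congr
      intro s hs
      rw [Set.uIcc_of_le hωE.le] at hs
      simp only
      rw [hωG s hs.1]
    have e2 : (∫ s in (0:ℝ)..E ω, (if 0 < L s ω then (1:ℝ) else 0))
        = ∫ s in Ioc (0:ℝ) (E ω), (if 0 < L s ω then (1:ℝ) else 0) :=
      intervalIntegral.integral_of_le hωE.le
    have e3 : (∫ s in Ioc (0:ℝ) (E ω), (if 0 < L s ω then (1:ℝ) else 0))
        = (∫⁻ s in Ioc (0:ℝ) (E ω), ENNReal.ofReal (if 0 < L s ω then (1:ℝ) else 0)).toReal := by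
      apply integral_eq_lintegral_of_nonneg_ae
      · exact ae_of_all _ fun s => by by_cases h : 0 < L s ω <;> simp [h]
      · exact (Measurable.ite (measurableSet_lt measurable_const hLsecm)
          measurable_const measurable_const).aestronglyMeasurable
    have e4 : (∫⁻ s in Ioc (0:ℝ) (E ω), ENNReal.ofReal (if 0 < L s ω then (1:ℝ) else 0))
        = ∫⁻ s in Ioo (0:ℝ) (E ω), ENNReal.ofReal (if 0 < L s ω then (1:ℝ) else 0) := by
      rw [Measure.restrict_congr_set Ioo_ae_eq_Ioc]
    have e5 : (∫⁻ s in Ioo (0:ℝ) (E ω), ENNReal.ofReal (if 0 < L s ω then (1:ℝ) else 0))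
        = ∫⁻ s, k s ω := by
      rw [← lintegral_indicator measurableSet_Ioo]
      apply lintegral_congr
      intro s
      by_cases h1 : s ∈ Ioo (0:ℝ) (E ω)
      · rw [Set.indicator_of_mem h1]
        rw [Set.mem_Ioo] at h1
        by_cases h2 : 0 < L s ω <;> simp [hkdef, h1.1, h1.2, h2]
      · rw [Set.indicator_of_notMem h1]
        rw [Set.mem_Ioo] at h1
        push_neg at h1
        simp only [hkdef]
        rw [if_neg]
        rintro ⟨hs1, hs2, -⟩
        exact absurd (h1 hs1) (not_le.mpr hs2)
    rw [e1, e2, e3, e4, e5]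
  -- the one-dimensional distribution function
  set pfun : ℝ → ℝ≥0∞ := fun t => P {ω | 0 < L t ω} with hpdef
  have hLsec : ∀ t : ℝ, Measurable (fun ω => L t ω) :=
    fun t => hLmeas.comp (measurable_const.prodMk measurable_id)
  have hLsetm : ∀ t : ℝ, MeasurableSet {ω | 0 < L t ω} :=
    fun t => measurableSet_lt measurable_const (hLsec t)
  have hpfun_int : ∀ t, pfun t = ∫⁻ ω, (if 0 < L t ω then (1:ℝ≥0∞) else 0) ∂P :=
    fun t => (SojournAux.lintegral_ite_one (hLsetm t)).symm
  have hpmeas : Measurable pfun := by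
    rw [show pfun = fun t => ∫⁻ ω, (if 0 < L t ω then (1:ℝ≥0∞) else 0) ∂P from funext hpfun_int]
    exact Measurable.lintegral_prod_right
      (f := fun t ω => if 0 < L t ω then (1:ℝ≥0∞) else 0)
      (Measurable.ite (measurableSet_lt measurable_const hLmeas)
        measurable_const measurable_const)
  have hp_eq : ∀ t : ℝ, 0 ≤ t → pfun t = P {ω | 0 < X t ω} := by
    intro t ht
    apply measure_congr
    rw [Filter.eventuallyEq_set]
    filter_upwards [hG] with ω hω
    simp [Set.mem_setOf_eq, hω t ht]
  have hple : ∀ t, pfun t ≤ 1 := fun t => prob_le_one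
  have hpfin : ∀ t, pfun t ≠ ⊤ := fun t => measure_ne_top _ _
  -- the mean computation
  have hinner1 : ∀ s : ℝ, (∫⁻ ω, k s ω ∂P)
      = if 0 < s then pfun s * ENNReal.ofReal (Real.exp (-(q*s))) else 0 := by
    intro s
    by_cases hs : 0 < s
    · rw [if_pos hs]
      have e : ∀ ω, k s ω = if (s < E ω ∧ 0 < L s ω) then (1:ℝ≥0∞) else 0 := by
        intro ω
        simp only [hkdef]
        exact if_congr (and_iff_right hs) rfl rfl
      rw [lintegral_congr e, SojournAux.lintegral_ite_one (by
        simp only [Set.setOf_and]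
        exact (measurableSet_lt measurable_const hE).inter (hLsetm s))]
      have hset : {ω | s < E ω ∧ 0 < L s ω}
          = E ⁻¹' (Ioi s) ∩ XP ⁻¹' {f | 0 < SojournAux.Lpath s f} := rfl
      rw [hset, hEX.measure_inter_preimage_eq_mul _ _ measurableSet_Ioi
        (measurableSet_lt measurable_const (SojournAux.measurable_Lpath s)), hTail s hs.le]
      exact mul_comm _ _
    · rw [if_neg hs]
      have e : ∀ ω, k s ω = 0 := fun ω => by simp [hkdef, hs]
      rw [lintegral_congr e, lintegral_zero]
  set I1 : ℝ≥0∞ := ∫⁻ t in Ioi (0:ℝ), pfun t * ENNReal.ofReal (Real.exp (-(q*t))) with hI1def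
  have hswap1 : (∫⁻ ω, (∫⁻ s, k s ω) ∂P) = I1 := by
    rw [lintegral_lintegral_swap (μ := P) (ν := volume) (f := fun ω s => k s ω)
      ((hkmeas.comp measurable_swap).aemeasurable)]
    rw [lintegral_congr hinner1]
    have h : (fun s => if 0 < s then pfun s * ENNReal.ofReal (Real.exp (-(q*s))) else 0)
        = (Ioi (0:ℝ)).indicator (fun s => pfun s * ENNReal.ofReal (Real.exp (-(q*s)))) := by
      funext s; by_cases h : 0 < s <;> simp [h, Set.indicator, Set.mem_Ioi]
    rw [h, lintegral_indicator measurableSet_Ioi, hI1def]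
  have hI1le : I1 ≤ ENNReal.ofReal (1/q) := by
    rw [← SojournAux.lintegral_exp_Ioi hq, hI1def]
    apply lintegral_mono
    intro t
    calc pfun t * ENNReal.ofReal (Real.exp (-(q*t)))
        ≤ 1 * ENNReal.ofReal (Real.exp (-(q*t))) := mul_le_mul_left (hple t) _
      _ = _ := one_mul _
  have hI1top : I1 ≠ ⊤ := (lt_of_le_of_lt hI1le ENNReal.ofReal_lt_top).ne
  have hmean : (∫ ω, sojourn X (E ω) ω ∂P) = I1.toReal := by
    rw [integral_congr_ae hrep, integral_toReal hwmeas.aemeasurable (ae_of_all _ hfin), hswap1]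
  have hRHS1 : (∫ t in Ioi (0:ℝ), (P {ω | 0 < X t ω}).toReal * Real.exp (-q * t)) = I1.toReal := by
    have e0 : Set.EqOn (fun t => (P {ω | 0 < X t ω}).toReal * Real.exp (-q * t))
        (fun t => (pfun t).toReal * Real.exp (-(q * t))) (Ioi 0) := by
      intro t ht
      simp only
      rw [hp_eq t (le_of_lt ht), neg_mul]
    rw [setIntegral_congr_fun measurableSet_Ioi e0]
    rw [SojournAux.real_eq_toReal (w := fun t => Real.exp (-(q * t))) hpmeas hpfin
      (by fun_prop) (fun t _ => (Real.exp_pos _).le)]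
  -- variance: the two-dimensional distribution function
  set cfun : ℝ → ℝ → ℝ≥0∞ := fun s t => P {ω | 0 < L s ω ∧ 0 < L t ω} with hcdef
  have hcsetm : ∀ s t : ℝ, MeasurableSet {ω | 0 < L s ω ∧ 0 < L t ω} := by
    intro s t
    simp only [Set.setOf_and]
    exact (hLsetm s).inter (hLsetm t)
  have hcint : ∀ s t, cfun s t = ∫⁻ ω, (if 0 < L s ω ∧ 0 < L t ω then (1:ℝ≥0∞) else 0) ∂P :=
    fun s t => (SojournAux.lintegral_ite_one (hcsetm s t)).symm
  have hcmeas : Measurable (Function.uncurry cfun) := by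
    rw [show Function.uncurry cfun
        = fun p : ℝ × ℝ => ∫⁻ ω, (if 0 < L p.1 ω ∧ 0 < L p.2 ω then (1:ℝ≥0∞) else 0) ∂P
      from funext fun p => hcint p.1 p.2]
    apply Measurable.lintegral_prod_right
      (f := fun (p : ℝ × ℝ) ω => if 0 < L p.1 ω ∧ 0 < L p.2 ω then (1:ℝ≥0∞) else 0)
    apply Measurable.ite _ measurable_const measurable_const
    simp only [Set.setOf_and]
    exact (measurableSet_lt measurable_const
        (hLmeas.comp ((measurable_fst.comp measurable_fst).prodMk measurable_snd))).inter
      (measurableSet_lt measurable_const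
        (hLmeas.comp ((measurable_snd.comp measurable_fst).prodMk measurable_snd)))
  have hc_symm : ∀ s t, cfun s t = cfun t s := by
    intro s t
    simp only [hcdef]
    congr 1
    ext ω
    simp only [Set.mem_setOf_eq]
    exact and_comm
  have hc_eq : ∀ s t : ℝ, 0 ≤ s → 0 ≤ t → cfun s t = P {ω | 0 < X s ω ∧ 0 < X t ω} := by
    intro s t hs ht
    apply measure_congr
    rw [Filter.eventuallyEq_set]
    filter_upwards [hG] with ω hω
    simp [Set.mem_setOf_eq, hω s hs, hω t ht]
  have hind1 : ∀ a b : ℝ, 0 ≤ a → a ≤ b → IndepFun (fun ω => X b ω - X a ω) (X a) P := by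
    intro a b ha hab
    have h := hX.indep a b ha hab 1 (fun _ => a) (fun _ => ⟨ha, le_rfl⟩)
    exact h.comp measurable_id (measurable_pi_apply 0)
  have hkey : ∀ s u : ℝ, 0 < s → 0 < u →
      cfun s (s+u) + cfun u (s+u) = pfun (s+u) + pfun s * pfun u := by
    intro s u hs hu
    rw [hc_eq s (s+u) hs.le (by linarith), hc_eq u (s+u) hu.le (by linarith),
      hp_eq (s+u) (by linarith), hp_eq s hs.le, hp_eq u hu.le]
    exact SojournAux.levy_key hX.measurable hs.le hu.le hX.stationary hind1
  -- product of two indicators integrated over ω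
  have hinner2 : ∀ s t : ℝ, (∫⁻ ω, k s ω * k t ω ∂P)
      = if 0 < s ∧ 0 < t
        then ENNReal.ofReal (Real.exp (-(q * max s t))) * cfun s t else 0 := by
    intro s t
    by_cases h : 0 < s ∧ 0 < t
    · obtain ⟨hs, ht⟩ := h
      rw [if_pos ⟨hs, ht⟩]
      have e : ∀ ω, k s ω * k t ω
          = if (max s t < E ω ∧ (0 < L s ω ∧ 0 < L t ω)) then (1:ℝ≥0∞) else 0 := by
        intro ω
        simp only [hkdef]
        by_cases hc : max s t < E ω ∧ (0 < L s ω ∧ 0 < L t ω)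
        · rw [if_pos hc, if_pos ⟨hs, lt_of_le_of_lt (le_max_left s t) hc.1, hc.2.1⟩,
            if_pos ⟨ht, lt_of_le_of_lt (le_max_right s t) hc.1, hc.2.2⟩, one_mul]
        · rw [if_neg hc]
          by_cases h1 : 0 < s ∧ s < E ω ∧ 0 < L s ω
          · by_cases h2 : 0 < t ∧ t < E ω ∧ 0 < L t ω
            · exact absurd ⟨max_lt h1.2.1 h2.2.1, h1.2.2, h2.2.2⟩ hc
            · rw [if_neg h2, mul_zero]
          · rw [if_neg h1, zero_mul]
      rw [lintegral_congr e, SojournAux.lintegral_ite_one (by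
        simp only [Set.setOf_and]
        exact (measurableSet_lt measurable_const hE).inter
          ((hLsetm s).inter (hLsetm t)))]
      have hset : {ω | max s t < E ω ∧ (0 < L s ω ∧ 0 < L t ω)}
          = E ⁻¹' (Ioi (max s t))
            ∩ XP ⁻¹' {f | 0 < SojournAux.Lpath s f ∧ 0 < SojournAux.Lpath t f} := rfl
      rw [hset, hEX.measure_inter_preimage_eq_mul _ _ measurableSet_Ioi (by
          simp only [Set.setOf_and]
          exact (measurableSet_lt measurable_const (SojournAux.measurable_Lpath s)).inter
            (measurableSet_lt measurable_const (SojournAux.measurable_Lpath t))),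
        hTail (max s t) (le_trans hs.le (le_max_left s t))]
      rfl
    · rw [if_neg h]
      have e : ∀ ω, k s ω * k t ω = 0 := by
        intro ω
        by_cases hs : 0 < s
        · have ht : ¬ 0 < t := fun ht => h ⟨hs, ht⟩
          rw [show k t ω = 0 from by simp [hkdef, ht], mul_zero]
        · rw [show k s ω = 0 from by simp [hkdef, hs], zero_mul]
      rw [lintegral_congr e, lintegral_zero]
  set W : ℝ → ℝ → ℝ≥0∞ := fun s t => ENNReal.ofReal (Real.exp (-(q * max s t))) * cfun s t
    with hWdef
  have hWmeas : Measurable (Function.uncurry W) := by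
    apply Measurable.mul
    · exact (Real.measurable_exp.comp
        (((measurable_fst.max measurable_snd)).const_mul q).neg).ennreal_ofReal
    · exact hcmeas
  have hWsymm : ∀ s t, W s t = W t s := by
    intro s t
    simp only [hWdef]
    rw [max_comm, hc_symm]
  set J : ℝ≥0∞ := ∫⁻ ω, (∫⁻ s, k s ω) * (∫⁻ t, k t ω) ∂P with hJdef
  have hJ1 : J = ∫⁻ s, ∫⁻ t, (∫⁻ ω, k s ω * k t ω ∂P) := by
    have e1 : ∀ ω, (∫⁻ s, k s ω) * (∫⁻ t, k t ω) = ∫⁻ s, ∫⁻ t, k s ω * k t ω := by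
      intro ω
      rw [← lintegral_mul_const' (∫⁻ t, k t ω) (fun s => k s ω) (hfin ω).ne]
      exact lintegral_congr fun s =>
        (lintegral_const_mul' (k s ω) _
          (lt_of_le_of_lt (hk_le_one s ω) (by norm_num)).ne).symm
    rw [hJdef, lintegral_congr e1]
    rw [lintegral_lintegral_swap (μ := P) (ν := volume)
      (f := fun ω s => ∫⁻ t, k s ω * k t ω)
      (Measurable.aemeasurable (Measurable.lintegral_prod_right
        (f := fun (p : Ω × ℝ) t => k p.2 p.1 * k t p.1)
        ((hkmeas.comp ((measurable_snd.comp measurable_fst).prodMk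
            (measurable_fst.comp measurable_fst))).mul
          (hkmeas.comp (measurable_snd.prodMk (measurable_fst.comp measurable_fst))))))]
    apply lintegral_congr
    intro s
    exact lintegral_lintegral_swap (μ := P) (ν := volume) (f := fun ω t => k s ω * k t ω)
      (((hkmeas.comp (measurable_const.prodMk measurable_fst)).mul
        (hkmeas.comp (measurable_snd.prodMk measurable_fst))).aemeasurable)
  have hJ2 : J = ∫⁻ s in Ioi (0:ℝ), ∫⁻ t in Ioi (0:ℝ), W s t := by
    rw [hJ1, SojournAux.double_restrict_eq (F := W)]
    apply lintegral_congr
    intro s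
    apply lintegral_congr
    intro t
    rw [hinner2 s t, hWdef]
  have hFmeas : Measurable (Function.uncurry
      (fun s u => ENNReal.ofReal (Real.exp (-(q * (u+s)))) * cfun s (u+s))) := by
    apply Measurable.mul
    · exact (Real.measurable_exp.comp
        (((measurable_snd.add measurable_fst)).const_mul q).neg).ennreal_ofReal
    · exact hcmeas.comp (measurable_fst.prodMk (measurable_snd.add measurable_fst))
  have hWsec : ∀ s, Measurable (W s) := by
    intro s
    have h : W s = Function.uncurry W ∘ (fun t => (s, t)) := rfl
    rw [h]
    exact hWmeas.comp measurable_prodMk_left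
  have hFsec : ∀ s : ℝ, Measurable
      (fun u => ENNReal.ofReal (Real.exp (-(q * (u+s)))) * cfun s (u+s)) := by
    intro s
    have h : (fun u => ENNReal.ofReal (Real.exp (-(q * (u+s)))) * cfun s (u+s))
        = Function.uncurry (fun s u => ENNReal.ofReal (Real.exp (-(q * (u+s)))) * cfun s (u+s))
          ∘ (fun u => (s, u)) := rfl
    rw [h]
    exact hFmeas.comp measurable_prodMk_left
  have hB : (∫⁻ s in Ioi (0:ℝ), ∫⁻ t in Ioi s, W s t)
      = ∫⁻ s in Ioi (0:ℝ), ∫⁻ u in Ioi (0:ℝ),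
          ENNReal.ofReal (Real.exp (-(q * (u+s)))) * cfun s (u+s) := by
    apply setLIntegral_congr_fun measurableSet_Ioi
    intro s hs
    beta_reduce
    rw [SojournAux.lintegral_Ioi_translate (hWsec s) s]
    apply setLIntegral_congr_fun measurableSet_Ioi
    intro u hu
    beta_reduce
    simp only [hWdef]
    rw [max_eq_right (le_of_lt (lt_add_of_pos_left s hu))]
  have hJ3 : J = ∫⁻ s in Ioi (0:ℝ), ∫⁻ u in Ioi (0:ℝ),
      ENNReal.ofReal (Real.exp (-(q * (u+s)))) * (cfun s (u+s) + cfun u (u+s)) := by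
    rw [hJ2, SojournAux.symm_split hWmeas hWsymm, two_mul, hB]
    nth_rewrite 2 [SojournAux.lintegral_Ioi_Ioi_swap hFmeas]
    rw [← lintegral_add_left (μ := volume.restrict (Ioi 0))
      (Measurable.lintegral_prod_right (f := fun s u =>
        ENNReal.ofReal (Real.exp (-(q * (u+s)))) * cfun s (u+s)) hFmeas)]
    apply setLIntegral_congr_fun measurableSet_Ioi
    intro s hs
    beta_reduce
    rw [← lintegral_add_left (μ := volume.restrict (Ioi 0)) (hFsec s)]
    apply setLIntegral_congr_fun measurableSet_Ioi
    intro u hu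
    beta_reduce
    rw [add_comm s u]
    exact (mul_add _ _ _).symm
  set V : ℝ≥0∞ := ∫⁻ t in Ioi (0:ℝ), pfun t * ENNReal.ofReal (t * Real.exp (-(q*t)))
    with hVdef
  have hgmeas : Measurable (fun t => ENNReal.ofReal (Real.exp (-(q*t))) * pfun t) :=
    ((Real.measurable_exp.comp ((measurable_id.const_mul q).neg)).ennreal_ofReal).mul hpmeas
  have hJ4 : J = V + I1 * I1 := by
    rw [hJ3]
    have step : ∀ s ∈ Ioi (0:ℝ), (∫⁻ u in Ioi (0:ℝ),
        ENNReal.ofReal (Real.exp (-(q * (u+s)))) * (cfun s (u+s) + cfun u (u+s)))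
        = (∫⁻ u in Ioi (0:ℝ), ENNReal.ofReal (Real.exp (-(q * (u+s)))) * pfun (u+s))
          + ∫⁻ u in Ioi (0:ℝ),
              ENNReal.ofReal (Real.exp (-(q * (u+s)))) * (pfun s * pfun u) := by
      intro s hs
      rw [← lintegral_add_left (μ := volume.restrict (Ioi 0))
        (f := fun u => ENNReal.ofReal (Real.exp (-(q * (u+s)))) * pfun (u+s)) (by fun_prop)]
      apply setLIntegral_congr_fun measurableSet_Ioi
      intro u hu
      beta_reduce
      rw [show u + s = s + u from add_comm u s, hkey s u hs hu]
      exact mul_add _ _ _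
    rw [setLIntegral_congr_fun measurableSet_Ioi step]
    rw [lintegral_add_left (μ := volume.restrict (Ioi 0))
      (f := fun s => ∫⁻ u in Ioi (0:ℝ), ENNReal.ofReal (Real.exp (-(q * (u+s)))) * pfun (u+s))
      (Measurable.lintegral_prod_right (f := fun s u =>
        ENNReal.ofReal (Real.exp (-(q * (u+s)))) * pfun (u+s)) (by fun_prop))]
    congr 1
    -- the T term equals V
    · have e1 : ∀ s ∈ Ioi (0:ℝ), (∫⁻ u in Ioi (0:ℝ),
          ENNReal.ofReal (Real.exp (-(q * (u+s)))) * pfun (u+s))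
          = ∫⁻ t in Ioi s, ENNReal.ofReal (Real.exp (-(q*t))) * pfun t := by
        intro s hs
        rw [SojournAux.lintegral_Ioi_translate hgmeas s]
      rw [setLIntegral_congr_fun measurableSet_Ioi e1,
        SojournAux.lintegral_triangle hgmeas, hVdef]
      apply setLIntegral_congr_fun measurableSet_Ioi
      intro t ht
      beta_reduce
      rw [ENNReal.ofReal_mul (le_of_lt ht)]
      ring
    -- the M term equals I1 * I1
    · have e2 : ∀ s ∈ Ioi (0:ℝ), (∫⁻ u in Ioi (0:ℝ),
          ENNReal.ofReal (Real.exp (-(q * (u+s)))) * (pfun s * pfun u))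
          = (pfun s * ENNReal.ofReal (Real.exp (-(q*s)))) * I1 := by
        intro s hs
        have e3 : ∀ u ∈ Ioi (0:ℝ),
            ENNReal.ofReal (Real.exp (-(q * (u+s)))) * (pfun s * pfun u)
            = (pfun s * ENNReal.ofReal (Real.exp (-(q*s))))
              * (pfun u * ENNReal.ofReal (Real.exp (-(q*u)))) := by
          intro u hu
          rw [show -(q * (u+s)) = -(q*u) + -(q*s) by ring, Real.exp_add,
            ENNReal.ofReal_mul (Real.exp_pos _).le]
          ring
        rw [setLIntegral_congr_fun measurableSet_Ioi e3]
        rw [lintegral_const_mul' _ _ (ENNReal.mul_ne_top (hpfin s) ENNReal.ofReal_ne_top)]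
      rw [setLIntegral_congr_fun measurableSet_Ioi e2]
      rw [lintegral_mul_const' _ _ hI1top, hI1def]
  have hVle : V ≤ ∫⁻ t in Ioi (0:ℝ), ENNReal.ofReal t * ENNReal.ofReal (Real.exp (-(q*t))) := by
    rw [hVdef]
    apply lintegral_mono
    intro t
    show pfun t * ENNReal.ofReal (t * Real.exp (-(q*t)))
      ≤ ENNReal.ofReal t * ENNReal.ofReal (Real.exp (-(q*t)))
    rcases le_or_gt t 0 with h | h
    · have h0 : ENNReal.ofReal (t * Real.exp (-(q*t))) = 0 :=
        ENNReal.ofReal_eq_zero.mpr (mul_nonpos_iff.mpr (Or.inr ⟨h, (Real.exp_pos _).le⟩))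
      rw [h0, mul_zero]
      exact zero_le
    · rw [ENNReal.ofReal_mul h.le]
      calc pfun t * (ENNReal.ofReal t * ENNReal.ofReal (Real.exp (-(q*t))))
          ≤ 1 * (ENNReal.ofReal t * ENNReal.ofReal (Real.exp (-(q*t)))) :=
            mul_le_mul_left (hple t) _
        _ = _ := one_mul _
  have hVtop : V ≠ ⊤ := (lt_of_le_of_lt hVle (SojournAux.lintegral_texp_Ioi_lt_top hq)).ne
  have hJtop : J ≠ ⊤ := by
    rw [hJ4]
    exact ENNReal.add_ne_top.mpr ⟨hVtop, ENNReal.mul_ne_top hI1top hI1top⟩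
  have hsq_pt : ∀ ω, ((∫⁻ s, k s ω).toReal)^2 = ((∫⁻ s, k s ω) * (∫⁻ t, k t ω)).toReal := by
    intro ω
    rw [ENNReal.toReal_mul]
    ring
  have hsq : (∫ ω, ((∫⁻ s, k s ω).toReal)^2 ∂P) = J.toReal := by
    rw [integral_congr_ae (ae_of_all P hsq_pt)]
    rw [integral_toReal (f := fun ω => (∫⁻ s, k s ω) * (∫⁻ t, k t ω)) ((hwmeas.mul hwmeas).aemeasurable)
      (ae_of_all _ fun ω => ENNReal.mul_lt_top (hfin ω) (hfin ω))]
  have hrep' : (fun ω => sojourn X (E ω) ω) =ᵐ[P] (fun ω => (∫⁻ s, k s ω).toReal) := hrep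
  have hMem : MemLp (fun ω => sojourn X (E ω) ω) 2 P := by
    have haesm : AEStronglyMeasurable (fun ω => sojourn X (E ω) ω) P :=
      ((ENNReal.measurable_toReal.comp hwmeas).aestronglyMeasurable).congr hrep'.symm
    rw [memLp_two_iff_integrable_sq haesm]
    have h2 : (fun ω => (sojourn X (E ω) ω)^2)
        =ᵐ[P] fun ω => ((∫⁻ s, k s ω).toReal)^2 := hrep.mono fun ω h => by
      change (sojourn X (E ω) ω)^2 = _
      rw [h]
    apply Integrable.congr _ h2.symm
    constructor
    · exact ((ENNReal.measurable_toReal.comp hwmeas).pow_const 2).aestronglyMeasurable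
    · rw [hasFiniteIntegral_iff_ofReal (ae_of_all _ fun ω => sq_nonneg _)]
      have e : ∀ ω, ENNReal.ofReal (((∫⁻ s, k s ω).toReal)^2)
          = (∫⁻ s, k s ω) * (∫⁻ t, k t ω) := by
        intro ω
        rw [hsq_pt ω, ENNReal.ofReal_toReal (ENNReal.mul_ne_top (hfin ω).ne (hfin ω).ne)]
      rw [lintegral_congr e, ← hJdef]
      exact hJtop.lt_top
  have hvar : variance (fun ω => sojourn X (E ω) ω) P = V.toReal := by
    rw [variance_eq_sub hMem]
    have h2 : (∫ x, ((fun ω => sojourn X (E ω) ω) ^ 2) x ∂P) = J.toReal := by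
      rw [show ((fun ω => sojourn X (E ω) ω) ^ 2) = fun ω => (sojourn X (E ω) ω)^2 from rfl]
      rw [integral_congr_ae (show _ =ᵐ[P] fun ω => ((∫⁻ s, k s ω).toReal)^2 from
        hrep.mono fun ω h => by
          change (sojourn X (E ω) ω)^2 = _
          rw [h])]
      exact hsq
    rw [h2, hmean, hJ4, ENNReal.toReal_add hVtop (ENNReal.mul_ne_top hI1top hI1top),
      ENNReal.toReal_mul]
    ring
  have hRHS2 : (∫ t in Ioi (0:ℝ), (P {ω | 0 < X t ω}).toReal * t * Real.exp (-q * t))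
      = V.toReal := by
    have e0 : Set.EqOn (fun t => (P {ω | 0 < X t ω}).toReal * t * Real.exp (-q * t))
        (fun t => (pfun t).toReal * (t * Real.exp (-(q * t)))) (Ioi 0) := by
      intro t ht
      simp only
      rw [hp_eq t (le_of_lt ht), neg_mul, mul_assoc]
    rw [setIntegral_congr_fun measurableSet_Ioi e0]
    rw [SojournAux.real_eq_toReal (w := fun t => t * Real.exp (-(q * t))) hpmeas hpfin
      (by fun_prop) (fun t ht => mul_nonneg (le_of_lt ht) (Real.exp_pos _).le)]
  refine ⟨?_, ?_, ?_⟩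
  · rw [hmean, hRHS1]
  · rw [hmean]
    calc I1.toReal ≤ (ENNReal.ofReal (1/q)).toReal :=
        ENNReal.toReal_mono ENNReal.ofReal_ne_top hI1le
      _ = 1/q := ENNReal.toReal_ofReal (by positivity)
  · rw [hvar, hRHS2]

end
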